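/- For every finite poset X with n elements, the pedestal polynomial 𝔥_P(x_1, x_2, x_3, …) = Σ_{Q ∈ Tot_X} m_{PQ}(x_1, x_2, x_3, …) does not depend on the choice of the linear extension P ∈ Tot_X. Equivalently, the matrix M̃^X with entries (M̃^X)_{PQ} = m_{PQ} is stochastic up to scale: the vector (1,1,…,1)ᵀ is a right eigenvector of M̃^X with eigenvalue 𝔥_X(x_1, x_2, x_3, …). -/

import Mathlib

/-- A linear extension of a partially ordered set `X` with `n` elements:
an order-preserving bijection `X ≃ Fin n`. -/
def LinExt (X : Type*) [PartialOrder X] (n : ℕ) : Type _ :=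
  {P : X ≃ Fin n // ∀ a b : X, a ≤ b → P a ≤ P b}

/-- The pedestal `q_{PQ}` of `Q` with respect to `P`, as a function of the (0-based)
position `k`: the number of positions `j ≤ k` such that `Q⁻¹(j)` is a
`(P,Q)`-disagreement node. -/
def ped {X : Type*} [PartialOrder X] {n : ℕ} (P Q : LinExt X n) (k : Fin n) : ℕ :=
  (Finset.univ.filter (fun j : Fin n => j ≤ k ∧ 0 < j.1 ∧
    P.1 (Q.1.symm j) <
      P.1 (Q.1.symm ⟨j.1 - 1, Nat.lt_of_le_of_lt (Nat.sub_le _ _) j.2⟩))).card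

/-- The monomial `m_{PQ} = x_1^{l_1-1} x_2^{l_2-l_1} ⋯ x_{r+1}^{n-l_r+1}` attached to the
pedestal of `Q` with respect to `P` (where `l_1 < … < l_r` are the positions of the
`(P,Q)`-disagreement nodes): position `k` contributes the variable `x_{1+q_{PQ}(Q⁻¹ k)}`. -/
noncomputable def pedMonomial {X : Type*} [PartialOrder X] {n : ℕ} (P Q : LinExt X n) :
    MvPolynomial ℕ ℤ :=
  ∏ k : Fin n, MvPolynomial.X (1 + ped P Q k)

namespace PedestalAux

/-- The monomial as a function of the permutation `σ = P ∘ Q⁻¹` of `Fin n`. -/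
noncomputable def F {n : ℕ} (σ : Equiv.Perm (Fin n)) : MvPolynomial ℕ ℤ :=
  ∏ k : Fin n, MvPolynomial.X (1 + (Finset.univ.filter (fun j : Fin n => j ≤ k ∧ 0 < j.1 ∧
    σ j < σ ⟨j.1 - 1, Nat.lt_of_le_of_lt (Nat.sub_le _ _) j.2⟩)).card)

lemma pedMonomial_eq {X : Type*} [PartialOrder X] {n : ℕ} (P Q : LinExt X n) :
    pedMonomial P Q = F (Q.1.symm.trans P.1) := rfl

lemma F_congr {n : ℕ} (σ σ' : Equiv.Perm (Fin n))
    (h : ∀ j : Fin n, 0 < j.1 →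
      (σ j < σ ⟨j.1 - 1, Nat.lt_of_le_of_lt (Nat.sub_le _ _) j.2⟩ ↔
        σ' j < σ' ⟨j.1 - 1, Nat.lt_of_le_of_lt (Nat.sub_le _ _) j.2⟩)) : F σ = F σ' := by
  unfold F
  refine Finset.prod_congr rfl fun k _ => ?_
  have hf : (Finset.univ.filter (fun j : Fin n => j ≤ k ∧ 0 < j.1 ∧
        σ j < σ ⟨j.1 - 1, Nat.lt_of_le_of_lt (Nat.sub_le _ _) j.2⟩)) =
      (Finset.univ.filter (fun j : Fin n => j ≤ k ∧ 0 < j.1 ∧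
        σ' j < σ' ⟨j.1 - 1, Nat.lt_of_le_of_lt (Nat.sub_le _ _) j.2⟩)) := by
    refine Finset.filter_congr fun j _ => ?_
    constructor
    · rintro ⟨h1, h2, h3⟩; exact ⟨h1, h2, (h j h2).mp h3⟩
    · rintro ⟨h1, h2, h3⟩; exact ⟨h1, h2, (h j h2).mpr h3⟩
  rw [hf]

lemma swap_lt_iff {n : ℕ} {i i1 : Fin n} (h1 : i.1 + 1 = i1.1) (x y : Fin n)
    (hx : ¬(x = i ∧ y = i1)) (hy : ¬(x = i1 ∧ y = i)) :
    Equiv.swap i i1 x < Equiv.swap i i1 y ↔ x < y := by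
  rw [Equiv.swap_apply_def, Equiv.swap_apply_def]
  simp only [Fin.ext_iff, Fin.lt_def] at hx hy ⊢
  split_ifs <;> omega

lemma swap_le {n : ℕ} {i i1 : Fin n} (h1 : i.1 + 1 = i1.1) (x y : Fin n)
    (hxy : x ≤ y) (hx : ¬(x = i ∧ y = i1)) :
    Equiv.swap i i1 x ≤ Equiv.swap i i1 y := by
  rw [Equiv.swap_apply_def, Equiv.swap_apply_def]
  rw [Fin.le_def] at hxy
  simp only [Fin.ext_iff, Fin.le_def] at hx ⊢
  have hinj : x.1 = y.1 → x = y := fun h => Fin.ext h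
  by_cases hxy' : x = y
  · subst hxy'; split_ifs <;> omega
  · have : x.1 ≠ y.1 := fun h => hxy' (Fin.ext h)
    split_ifs <;> omega

/-- Swap the values `i` and `i+1` of a linear extension `P`; this is again a linear
extension provided `P⁻¹ i ≰ P⁻¹ (i+1)`. -/
def swapExt {X : Type*} [PartialOrder X] {n : ℕ} (P : LinExt X n) (i i1 : Fin n)
    (h1 : i.1 + 1 = i1.1) (hab : ¬ P.1.symm i ≤ P.1.symm i1) : LinExt X n :=
  ⟨P.1.trans (Equiv.swap i i1), by
    intro c d hcd
    simp only [Equiv.trans_apply]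
    refine swap_le h1 _ _ (P.2 c d hcd) ?_
    rintro ⟨hc, hd⟩
    have hc' : P.1.symm i = c := by rw [← hc, Equiv.symm_apply_apply]
    have hd' : P.1.symm i1 = d := by rw [← hd, Equiv.symm_apply_apply]
    exact hab (hc' ▸ hd' ▸ hcd)⟩

/-- The involution on linear extensions `Q`: swap `a` and `b` in `Q` whenever they sit in
adjacent positions of `Q`, do nothing otherwise. -/
def gmap {X : Type*} [PartialOrder X] [DecidableEq X] {n : ℕ} (a b : X)
    (hab : ¬ a ≤ b) (hba : ¬ b ≤ a) (Q : LinExt X n) : LinExt X n :=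
  if h : (Q.1 a).1 + 1 = (Q.1 b).1 ∨ (Q.1 b).1 + 1 = (Q.1 a).1 then
    ⟨(Equiv.swap a b).trans Q.1, by
      intro c d hcd
      simp only [Equiv.trans_apply]
      have hcd' : (Q.1 c).1 ≤ (Q.1 d).1 := Q.2 c d hcd
      have inj2 : ∀ x y : X, (Q.1 x).1 = (Q.1 y).1 → x = y :=
        fun x y hh => Q.1.injective (Fin.ext hh)
      by_cases hca : c = a
      · by_cases hdb : d = b
        · exact absurd (by rw [← hca, ← hdb]; exact hcd) hab
        · by_cases hda : d = a
          · rw [hca, hda]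
          · rw [hca] at hcd'
            rw [hca, Equiv.swap_apply_left, Equiv.swap_apply_of_ne_of_ne hda hdb, Fin.le_def]
            have e1 : (Q.1 d).1 ≠ (Q.1 a).1 := fun hh => hda (inj2 d a hh)
            have e2 : (Q.1 d).1 ≠ (Q.1 b).1 := fun hh => hdb (inj2 d b hh)
            omega
      · by_cases hcb : c = b
        · by_cases hda : d = a
          · exact absurd (by rw [← hcb, ← hda]; exact hcd) hba
          · by_cases hdb : d = b
            · rw [hcb, hdb]
            · rw [hcb] at hcd'
              rw [hcb, Equiv.swap_apply_right, Equiv.swap_apply_of_ne_of_ne hda hdb, Fin.le_def]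
              have e1 : (Q.1 d).1 ≠ (Q.1 a).1 := fun hh => hda (inj2 d a hh)
              have e2 : (Q.1 d).1 ≠ (Q.1 b).1 := fun hh => hdb (inj2 d b hh)
              omega
        · rw [Equiv.swap_apply_of_ne_of_ne hca hcb]
          have e1 : (Q.1 c).1 ≠ (Q.1 a).1 := fun hh => hca (inj2 c a hh)
          have e2 : (Q.1 c).1 ≠ (Q.1 b).1 := fun hh => hcb (inj2 c b hh)
          by_cases hda : d = a
          · rw [hda] at hcd'
            rw [hda, Equiv.swap_apply_left, Fin.le_def]; omega
          · by_cases hdb : d = b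
            · rw [hdb] at hcd'
              rw [hdb, Equiv.swap_apply_right, Fin.le_def]; omega
            · rw [Equiv.swap_apply_of_ne_of_ne hda hdb]; exact Q.2 c d hcd⟩
  else Q

lemma gmap_involutive {X : Type*} [PartialOrder X] [DecidableEq X] {n : ℕ} (a b : X)
    (hab : ¬ a ≤ b) (hba : ¬ b ≤ a) :
    Function.Involutive (gmap a b hab hba : LinExt X n → LinExt X n) := by
  intro Q
  unfold gmap
  by_cases h : (Q.1 a).1 + 1 = (Q.1 b).1 ∨ (Q.1 b).1 + 1 = (Q.1 a).1
  · have h' : (Q.1 b).1 + 1 = (Q.1 a).1 ∨ (Q.1 a).1 + 1 = (Q.1 b).1 := h.symm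
    erw [dif_pos h]
    erw [dif_pos (show ((((⟨(Equiv.swap a b).trans Q.1, _⟩ : LinExt X n)).1 a).1 + 1 =
        (((⟨(Equiv.swap a b).trans Q.1, _⟩ : LinExt X n)).1 b).1 ∨
        (((⟨(Equiv.swap a b).trans Q.1, _⟩ : LinExt X n)).1 b).1 + 1 =
        (((⟨(Equiv.swap a b).trans Q.1, _⟩ : LinExt X n)).1 a).1) by
      simpa only [Equiv.trans_apply, Equiv.swap_apply_left, Equiv.swap_apply_right] using h')]
    apply Subtype.ext
    apply Equiv.ext
    intro x
    simp [Equiv.swap_apply_self]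
  · erw [dif_neg h, dif_neg h]

lemma pedMonomial_gmap {X : Type*} [PartialOrder X] [DecidableEq X] {n : ℕ}
    (P : LinExt X n) (i i1 : Fin n) (h1 : i.1 + 1 = i1.1)
    (hab : ¬ P.1.symm i ≤ P.1.symm i1) (hba : ¬ P.1.symm i1 ≤ P.1.symm i) (Q : LinExt X n) :
    pedMonomial (swapExt P i i1 h1 hab) (gmap (P.1.symm i) (P.1.symm i1) hab hba Q)
      = pedMonomial P Q := by
  have hPa : P.1 (P.1.symm i) = i := Equiv.apply_symm_apply _ _
  have hPb : P.1 (P.1.symm i1) = i1 := Equiv.apply_symm_apply _ _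
  unfold gmap
  by_cases h : (Q.1 (P.1.symm i)).1 + 1 = (Q.1 (P.1.symm i1)).1 ∨
      (Q.1 (P.1.symm i1)).1 + 1 = (Q.1 (P.1.symm i)).1
  · erw [dif_pos h]
    erw [pedMonomial_eq, pedMonomial_eq]
    congr 1
    apply Equiv.ext
    intro j
    show Equiv.swap i i1 (P.1 ((Equiv.swap (P.1.symm i) (P.1.symm i1)).symm (Q.1.symm j)))
      = P.1 (Q.1.symm j)
    rw [Equiv.symm_swap]
    by_cases hxa : Q.1.symm j = P.1.symm i
    · rw [hxa, Equiv.swap_apply_left, hPb, Equiv.swap_apply_right, hPa]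
    · by_cases hxb : Q.1.symm j = P.1.symm i1
      · rw [hxb, Equiv.swap_apply_right, hPa, Equiv.swap_apply_left, hPb]
      · rw [Equiv.swap_apply_of_ne_of_ne hxa hxb]
        have e1 : P.1 (Q.1.symm j) ≠ i := fun hh => hxa ((Equiv.eq_symm_apply _).mpr hh)
        have e2 : P.1 (Q.1.symm j) ≠ i1 := fun hh => hxb ((Equiv.eq_symm_apply _).mpr hh)
        exact Equiv.swap_apply_of_ne_of_ne e1 e2
  · erw [dif_neg h]
    rw [pedMonomial_eq, pedMonomial_eq]
    apply F_congr
    intro j hj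
    have key : ∀ u v : Fin n, P.1 (Q.1.symm u) = i → P.1 (Q.1.symm v) = i1 →
        Q.1 (P.1.symm i) = u ∧ Q.1 (P.1.symm i1) = v := by
      intro u v hu hv
      have h2 : Q.1.symm u = P.1.symm i := (Equiv.eq_symm_apply _).mpr hu
      have h3 : Q.1.symm v = P.1.symm i1 := (Equiv.eq_symm_apply _).mpr hv
      exact ⟨by rw [← h2, Equiv.apply_symm_apply], by rw [← h3, Equiv.apply_symm_apply]⟩
    show Equiv.swap i i1 (P.1 (Q.1.symm j)) <
        Equiv.swap i i1 (P.1 (Q.1.symm ⟨j.1 - 1, Nat.lt_of_le_of_lt (Nat.sub_le _ _) j.2⟩)) ↔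
      P.1 (Q.1.symm j) < P.1 (Q.1.symm ⟨j.1 - 1, Nat.lt_of_le_of_lt (Nat.sub_le _ _) j.2⟩)
    apply swap_lt_iff h1
    · rintro ⟨hu, hv⟩
      obtain ⟨hqa, hqb⟩ := key j ⟨j.1 - 1, Nat.lt_of_le_of_lt (Nat.sub_le _ _) j.2⟩ hu hv
      exact h (Or.inr (by rw [hqa, hqb]; simp only; omega))
    · rintro ⟨hu, hv⟩
      obtain ⟨hqa, hqb⟩ := key ⟨j.1 - 1, Nat.lt_of_le_of_lt (Nat.sub_le _ _) j.2⟩ j hv hu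
      exact h (Or.inl (by rw [hqa, hqb]; simp only; omega))

lemma sum_swap_step {X : Type*} [PartialOrder X] [DecidableEq X] {n : ℕ}
    [Fintype (LinExt X n)] (P : LinExt X n) (i i1 : Fin n) (h1 : i.1 + 1 = i1.1)
    (hab : ¬ P.1.symm i ≤ P.1.symm i1) (hba : ¬ P.1.symm i1 ≤ P.1.symm i) :
    ∑ Q : LinExt X n, pedMonomial (swapExt P i i1 h1 hab) Q
      = ∑ Q : LinExt X n, pedMonomial P Q := by
  have hbij := (gmap_involutive (P.1.symm i) (P.1.symm i1) hab hba (n := n)).bijective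
  calc ∑ Q : LinExt X n, pedMonomial (swapExt P i i1 h1 hab) Q
      = ∑ Q : LinExt X n,
          pedMonomial (swapExt P i i1 h1 hab) (gmap (P.1.symm i) (P.1.symm i1) hab hba Q) :=
        (Fintype.sum_bijective _ hbij
          (fun Q => pedMonomial (swapExt P i i1 h1 hab)
            (gmap (P.1.symm i) (P.1.symm i1) hab hba Q))
          (fun Q => pedMonomial (swapExt P i i1 h1 hab) Q) (fun Q => rfl)).symm
    _ = ∑ Q : LinExt X n, pedMonomial P Q :=
        Finset.sum_congr rfl fun Q _ => pedMonomial_gmap P i i1 h1 hab hba Q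

/-- The set of inversions of a permutation of `Fin n`. -/
def invs {n : ℕ} (σ : Equiv.Perm (Fin n)) : Finset (Fin n × Fin n) :=
  Finset.univ.filter (fun p => p.1 < p.2 ∧ σ p.2 < σ p.1)

lemma invs_decrease {n : ℕ} (σ : Equiv.Perm (Fin n)) (i i1 : Fin n) (h1 : i.1 + 1 = i1.1)
    (hd : σ i1 < σ i) :
    (invs ((Equiv.swap i i1).trans σ)).card < (invs σ).card := by
  have hii : i < i1 := by rw [Fin.lt_def]; omega
  have hmem : (i, i1) ∈ invs σ := by
    simp only [invs, Finset.mem_filter, Finset.mem_univ, true_and]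
    exact ⟨hii, hd⟩
  have hmaps : ∀ p ∈ invs ((Equiv.swap i i1).trans σ),
      (Equiv.swap i i1 p.1, Equiv.swap i i1 p.2) ∈ (invs σ).erase (i, i1) := by
    rintro ⟨u, v⟩ hp
    rw [invs, Finset.mem_filter] at hp
    simp only [Finset.mem_univ, true_and, Equiv.trans_apply] at hp
    obtain ⟨huv, hσ⟩ := hp
    have hx : ¬(u = i ∧ v = i1) := by
      rintro ⟨rfl, rfl⟩
      rw [Equiv.swap_apply_left, Equiv.swap_apply_right] at hσ
      exact absurd hd (lt_asymm hσ)
    have hy : ¬(u = i1 ∧ v = i) := by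
      rintro ⟨rfl, rfl⟩
      rw [Fin.lt_def] at huv
      omega
    rw [Finset.mem_erase]
    constructor
    · intro hh
      have hu : u = i1 := by
        have := congrArg Prod.fst hh
        simp only at this
        have : Equiv.swap i i1 u = i := this
        have := congrArg (Equiv.swap i i1) this
        rwa [Equiv.swap_apply_self, Equiv.swap_apply_left] at this
      have hv : v = i := by
        have := congrArg Prod.snd hh
        simp only at this
        have : Equiv.swap i i1 v = i1 := this
        have := congrArg (Equiv.swap i i1) this
        rwa [Equiv.swap_apply_self, Equiv.swap_apply_right] at this
      exact hy ⟨hu, hv⟩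
    · simp only [invs, Finset.mem_filter, Finset.mem_univ, true_and]
      exact ⟨(swap_lt_iff h1 u v hx hy).mpr huv, hσ⟩
  have hinj : Set.InjOn (fun p : Fin n × Fin n => (Equiv.swap i i1 p.1, Equiv.swap i i1 p.2))
      (invs ((Equiv.swap i i1).trans σ)) := by
    rintro ⟨u, v⟩ _ ⟨u', v'⟩ _ hh
    have h1' := congrArg Prod.fst hh
    have h2' := congrArg Prod.snd hh
    simp only at h1' h2'
    exact Prod.ext ((Equiv.swap i i1).injective h1') ((Equiv.swap i i1).injective h2')
  calc (invs ((Equiv.swap i i1).trans σ)).card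
      ≤ ((invs σ).erase (i, i1)).card := Finset.card_le_card_of_injOn _ hmaps hinj
    _ < (invs σ).card := Finset.card_erase_lt_of_mem hmem

lemma strictMono_of_adj {n : ℕ} (f : Fin n → Fin n)
    (h : ∀ (i : ℕ) (hi : i + 1 < n), f ⟨i, Nat.lt_of_succ_lt hi⟩ < f ⟨i + 1, hi⟩) :
    StrictMono f := by
  have key : ∀ d : ℕ, ∀ j k : Fin n, k.1 = j.1 + d + 1 → f j < f k := by
    intro d
    induction d with
    | zero =>
      intro j k hk
      have hkn : j.1 + 1 < n := by have h2 := k.2; omega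
      have hthis := h j.1 hkn
      have hj : (⟨j.1, Nat.lt_of_succ_lt hkn⟩ : Fin n) = j := rfl
      have hk' : (⟨j.1 + 1, hkn⟩ : Fin n) = k := by
        apply Fin.ext
        show j.1 + 1 = k.1
        omega
      rwa [hj, hk'] at hthis
    | succ d ih =>
      intro j k hk
      have h2' := k.2
      have hlt : j.1 + d + 1 < n := by omega
      have hA := ih j ⟨j.1 + d + 1, hlt⟩ rfl
      have hkn : j.1 + d + 1 + 1 < n := by omega
      have hB := h (j.1 + d + 1) hkn
      have hk' : (⟨j.1 + d + 1 + 1, hkn⟩ : Fin n) = k := by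
        apply Fin.ext
        show j.1 + d + 1 + 1 = k.1
        omega
      rw [hk'] at hB
      exact lt_trans hA hB
  intro j k hjk
  rw [Fin.lt_def] at hjk
  exact key (k.1 - j.1 - 1) j k (by omega)

lemma eq_refl_of_no_descent {n : ℕ} (σ : Equiv.Perm (Fin n))
    (h : ∀ (i : ℕ) (hi : i + 1 < n),
      ¬ σ ⟨i + 1, hi⟩ < σ ⟨i, Nat.lt_of_succ_lt hi⟩) : σ = Equiv.refl (Fin n) := by
  have hm : StrictMono σ := by
    apply strictMono_of_adj
    intro i hi
    rcases lt_trichotomy (σ ⟨i, Nat.lt_of_succ_lt hi⟩) (σ ⟨i + 1, hi⟩) with h' | h' | h'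
    · exact h'
    · exact absurd (σ.injective h') (by simp [Fin.ext_iff])
    · exact absurd h' (h i hi)
  have hcoe : ⇑(StrictMono.orderIsoOfSurjective σ hm σ.surjective) = ⇑σ :=
    StrictMono.coe_orderIsoOfSurjective _ _ _
  rw [Subsingleton.elim (StrictMono.orderIsoOfSurjective σ hm σ.surjective)
      (OrderIso.refl (Fin n))] at hcoe
  apply Equiv.ext
  intro x
  have hx := congrFun hcoe x
  simpa using hx.symm

lemma key_induction {X : Type*} [PartialOrder X] [DecidableEq X] {n : ℕ}
    [Fintype (LinExt X n)] :
    ∀ (m : ℕ) (P P' : LinExt X n), (invs (P.1.symm.trans P'.1)).card ≤ m →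
      ∑ Q : LinExt X n, pedMonomial P' Q = ∑ Q : LinExt X n, pedMonomial P Q := by
  intro m
  induction m with
  | zero =>
    intro P P' hm
    by_cases hid : P.1.symm.trans P'.1 = Equiv.refl (Fin n)
    · have hPP : P' = P := by
        apply Subtype.ext
        apply Equiv.ext
        intro x
        have := congrFun (congrArg (fun e : Equiv.Perm (Fin n) => (e : Fin n → Fin n)) hid)
          (P.1 x)
        simpa [Equiv.trans_apply] using this
      rw [hPP]
    · exfalso
      have : ∃ (i : ℕ) (hi : i + 1 < n),
          (P.1.symm.trans P'.1) ⟨i + 1, hi⟩ < (P.1.symm.trans P'.1) ⟨i, Nat.lt_of_succ_lt hi⟩ := by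
        by_contra hno
        push_neg at hno
        exact hid (eq_refl_of_no_descent _ (fun i hi => not_lt.mpr (hno i hi)))
      obtain ⟨i, hi, hd⟩ := this
      have hmem : (⟨i, Nat.lt_of_succ_lt hi⟩, (⟨i + 1, hi⟩ : Fin n)) ∈
          invs (P.1.symm.trans P'.1) := by
        simp only [invs, Finset.mem_filter, Finset.mem_univ, true_and]
        exact ⟨Fin.mk_lt_mk.mpr (by omega), hd⟩
      have := Finset.card_pos.mpr ⟨_, hmem⟩
      omega
  | succ m ih =>
    intro P P' hm
    by_cases hid : P.1.symm.trans P'.1 = Equiv.refl (Fin n)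
    · have hPP : P' = P := by
        apply Subtype.ext
        apply Equiv.ext
        intro x
        have := congrFun (congrArg (fun e : Equiv.Perm (Fin n) => (e : Fin n → Fin n)) hid)
          (P.1 x)
        simpa [Equiv.trans_apply] using this
      rw [hPP]
    · have : ∃ (i : ℕ) (hi : i + 1 < n),
          (P.1.symm.trans P'.1) ⟨i + 1, hi⟩ < (P.1.symm.trans P'.1) ⟨i, Nat.lt_of_succ_lt hi⟩ := by
        by_contra hno
        push_neg at hno
        exact hid (eq_refl_of_no_descent _ (fun i hi => not_lt.mpr (hno i hi)))
      obtain ⟨i, hi, hd⟩ := this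
      set iF : Fin n := ⟨i, Nat.lt_of_succ_lt hi⟩ with hiF
      set i1F : Fin n := ⟨i + 1, hi⟩ with hi1F
      have h1 : iF.1 + 1 = i1F.1 := rfl
      have hab : ¬ P.1.symm iF ≤ P.1.symm i1F := by
        intro hle
        have := P'.2 _ _ hle
        simp only [Equiv.trans_apply] at hd
        exact absurd this (not_le.mpr hd)
      have hba : ¬ P.1.symm i1F ≤ P.1.symm iF := by
        intro hle
        have := P.2 _ _ hle
        rw [Equiv.apply_symm_apply, Equiv.apply_symm_apply, Fin.le_def] at this
        omega
      set P'' := swapExt P iF i1F h1 hab with hP''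
      have hσ : P''.1.symm.trans P'.1 = (Equiv.swap iF i1F).trans (P.1.symm.trans P'.1) :=
        Equiv.ext fun j => rfl
      have hdec : (invs (P''.1.symm.trans P'.1)).card < (invs (P.1.symm.trans P'.1)).card := by
        rw [hσ]
        exact invs_decrease _ iF i1F h1 hd
      have hstep : ∑ Q : LinExt X n, pedMonomial P'' Q = ∑ Q : LinExt X n, pedMonomial P Q :=
        sum_swap_step P iF i1F h1 hab hba
      have hih := ih P'' P' (by omega)
      exact hih.trans hstep

end PedestalAux

/-- The pedestal polynomial `𝔥_P = Σ_Q m_{PQ}` does not depend on the linear extension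
`P`; equivalently the matrix `M̃^X` with entries `m_{PQ}` is stochastic up to scale: the
all-ones vector is a right eigenvector, with eigenvalue `𝔥_X`. -/
theorem pedestal_polynomial_independent (X : Type*) [PartialOrder X] [Fintype X] (n : ℕ)
    (hn : Fintype.card X = n) [Fintype (LinExt X n)] :
    (∀ P P' : LinExt X n,
      ∑ Q : LinExt X n, pedMonomial P Q = ∑ Q : LinExt X n, pedMonomial P' Q) ∧
    Matrix.mulVec (fun P Q : LinExt X n => pedMonomial P Q) (fun _ => 1) =
      fun P => ∑ Q : LinExt X n, pedMonomial P Q := by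
  classical
  constructor
  · intro P P'
    exact (PedestalAux.key_induction _ P P' le_rfl).symm
  · funext P
    simp [Matrix.mulVec, dotProduct]
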